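/- In a deduction in normal form in the system C, on any branch, every formula occurrence that is the major premise of an elimination rule precedes every formula occurrence that is a major assumption discharged by an introduction rule. -/

import Mathlib

/- Milne's system **C** of classical propositional logic with general
introduction and general elimination rules (Kürbis, "Normalisation and
Subformula Property for a System of Classical Logic with Tarski's Rule").

Formulas are built from atoms by ¬, ∧, ∨, ⊃. -/
inductive Formula : Type
  | atom : ℕ → Formula
  | neg  : Formula → Formula
  | conj : Formula → Formula → Formula
  | disj : Formula → Formula → Formula
  | imp  : Formula → Formula → Formula
  deriving DecidableEq

/-- Raw deduction trees of the system **C**.  Assumption occurrences carry a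
label (natural number) marking their assumption class; each rule that
discharges assumptions records the label(s) of the class(es) it discharges.
Constructor arguments list first the labels, then the formulas figuring in the
rule, then the immediate subdeductions (major premise first for eliminations;
for introductions: the specific premise(s), then the deduction of the
arbitrary premise from the discharged major assumption).

* `ass ℓ A`           : the assumption `A`, in assumption class `ℓ`.
* `andI ℓ A B ΣA ΣB Π` : from `A`, `B` and `C`-from-`[A∧B]^ℓ` infer `C`.
* `andE ℓA ℓB A B M Π` : from `A∧B` and `C`-from-`[A]^ℓA,[B]^ℓB` infer `C`.
* `orI₁ ℓ A B ΣA Π`    : from `A` and `C`-from-`[A∨B]^ℓ` infer `C`.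
* `orI₂ ℓ A B ΣB Π`    : from `B` and `C`-from-`[A∨B]^ℓ` infer `C`.
* `orE ℓA ℓB A B M Π Ξ`: from `A∨B`, `C`-from-`[A]^ℓA`, `C`-from-`[B]^ℓB` infer `C`.
* `impI ℓ A B ΣB Π`    : from `B` and `C`-from-`[A⊃B]^ℓ` infer `C`.
* `tr ℓA ℓAB A B Π Ξ`  : Tarski's Rule: from `C`-from-`[A]^ℓA` and
                         `C`-from-`[A⊃B]^ℓAB` infer `C`.
* `impE ℓ A B M ΣA Π`  : from `A⊃B`, `A` and `C`-from-`[B]^ℓ` infer `C`.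
* `negI ℓA ℓnA A Π Ξ`  : from `C`-from-`[A]^ℓA` and `C`-from-`[¬A]^ℓnA` infer `C`.
* `negE A C M ΣA`      : from `¬A` and `A` infer any `C`. -/
inductive PT : Type
  | ass  : ℕ → Formula → PT
  | andI : ℕ → Formula → Formula → PT → PT → PT → PT
  | andE : ℕ → ℕ → Formula → Formula → PT → PT → PT
  | orI₁ : ℕ → Formula → Formula → PT → PT → PT
  | orI₂ : ℕ → Formula → Formula → PT → PT → PT
  | orE  : ℕ → ℕ → Formula → Formula → PT → PT → PT → PT
  | impI : ℕ → Formula → Formula → PT → PT → PT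
  | tr   : ℕ → ℕ → Formula → Formula → PT → PT → PT
  | impE : ℕ → Formula → Formula → PT → PT → PT → PT
  | negI : ℕ → ℕ → Formula → PT → PT → PT
  | negE : Formula → Formula → PT → PT → PT
  deriving DecidableEq

namespace PT

/-- The conclusion (root formula) of a deduction tree. -/
def concl : PT → Formula
  | .ass _ A => A
  | .andI _ _ _ _ _ r => r.concl
  | .andE _ _ _ _ _ q => q.concl
  | .orI₁ _ _ _ _ q => q.concl
  | .orI₂ _ _ _ _ q => q.concl
  | .orE _ _ _ _ _ q _ => q.concl
  | .impI _ _ _ _ q => q.concl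
  | .tr _ _ _ _ p _ => p.concl
  | .impE _ _ _ _ _ r => r.concl
  | .negI _ _ _ p _ => p.concl
  | .negE _ C _ _ => C

/-- The multiset of open (undischarged) labelled assumptions of a deduction. -/
def openAss : PT → Multiset (ℕ × Formula)
  | .ass ℓ A => {(ℓ, A)}
  | .andI ℓ _ _ p q r =>
      p.openAss + q.openAss + (r.openAss.filter fun z => z.1 ≠ ℓ)
  | .andE ℓA ℓB _ _ p q =>
      p.openAss + (q.openAss.filter fun z => z.1 ≠ ℓA ∧ z.1 ≠ ℓB)
  | .orI₁ ℓ _ _ p q => p.openAss + (q.openAss.filter fun z => z.1 ≠ ℓ)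
  | .orI₂ ℓ _ _ p q => p.openAss + (q.openAss.filter fun z => z.1 ≠ ℓ)
  | .orE ℓA ℓB _ _ p q r =>
      p.openAss + (q.openAss.filter fun z => z.1 ≠ ℓA) +
        (r.openAss.filter fun z => z.1 ≠ ℓB)
  | .impI ℓ _ _ p q => p.openAss + (q.openAss.filter fun z => z.1 ≠ ℓ)
  | .tr ℓA ℓAB _ _ p q =>
      (p.openAss.filter fun z => z.1 ≠ ℓA) + (q.openAss.filter fun z => z.1 ≠ ℓAB)
  | .impE ℓ _ _ p q r =>
      p.openAss + q.openAss + (r.openAss.filter fun z => z.1 ≠ ℓ)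
  | .negI ℓA ℓnA _ p q =>
      (p.openAss.filter fun z => z.1 ≠ ℓA) + (q.openAss.filter fun z => z.1 ≠ ℓnA)
  | .negE _ _ p q => p.openAss + q.openAss

/-- Correctness of a deduction tree: the subdeductions conclude the right
formulas, every open assumption in a discharged class has the form required
by the rule, and (ban on vacuous discharge above arbitrary premises) each
discharge actually discharges at least one assumption occurrence — in `∧E`
at least one of the two classes `[A]`, `[B]` is non-empty, which reflects the
option of discharging only one of the two assumptions. -/
def wf : PT → Prop
  | .ass _ _ => True
  | .andI ℓ A B p q r => p.wf ∧ q.wf ∧ r.wf ∧ p.concl = A ∧ q.concl = B ∧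
      (∀ F, (ℓ, F) ∈ r.openAss → F = Formula.conj A B) ∧
      (ℓ, Formula.conj A B) ∈ r.openAss
  | .andE ℓA ℓB A B p q => p.wf ∧ q.wf ∧ p.concl = Formula.conj A B ∧
      (∀ F, (ℓA, F) ∈ q.openAss → F = A) ∧ (∀ F, (ℓB, F) ∈ q.openAss → F = B) ∧
      ((ℓA, A) ∈ q.openAss ∨ (ℓB, B) ∈ q.openAss)
  | .orI₁ ℓ A B p q => p.wf ∧ q.wf ∧ p.concl = A ∧
      (∀ F, (ℓ, F) ∈ q.openAss → F = Formula.disj A B) ∧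
      (ℓ, Formula.disj A B) ∈ q.openAss
  | .orI₂ ℓ A B p q => p.wf ∧ q.wf ∧ p.concl = B ∧
      (∀ F, (ℓ, F) ∈ q.openAss → F = Formula.disj A B) ∧
      (ℓ, Formula.disj A B) ∈ q.openAss
  | .orE ℓA ℓB A B p q r => p.wf ∧ q.wf ∧ r.wf ∧
      p.concl = Formula.disj A B ∧ q.concl = r.concl ∧
      (∀ F, (ℓA, F) ∈ q.openAss → F = A) ∧ (ℓA, A) ∈ q.openAss ∧
      (∀ F, (ℓB, F) ∈ r.openAss → F = B) ∧ (ℓB, B) ∈ r.openAss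
  | .impI ℓ A B p q => p.wf ∧ q.wf ∧ p.concl = B ∧
      (∀ F, (ℓ, F) ∈ q.openAss → F = Formula.imp A B) ∧
      (ℓ, Formula.imp A B) ∈ q.openAss
  | .tr ℓA ℓAB A B p q => p.wf ∧ q.wf ∧ p.concl = q.concl ∧
      (∀ F, (ℓA, F) ∈ p.openAss → F = A) ∧ (ℓA, A) ∈ p.openAss ∧
      (∀ F, (ℓAB, F) ∈ q.openAss → F = Formula.imp A B) ∧
      (ℓAB, Formula.imp A B) ∈ q.openAss
  | .impE ℓ A B p q r => p.wf ∧ q.wf ∧ r.wf ∧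
      p.concl = Formula.imp A B ∧ q.concl = A ∧
      (∀ F, (ℓ, F) ∈ r.openAss → F = B) ∧ (ℓ, B) ∈ r.openAss
  | .negI ℓA ℓnA A p q => p.wf ∧ q.wf ∧ p.concl = q.concl ∧
      (∀ F, (ℓA, F) ∈ p.openAss → F = A) ∧ (ℓA, A) ∈ p.openAss ∧
      (∀ F, (ℓnA, F) ∈ q.openAss → F = Formula.neg A) ∧
      (ℓnA, Formula.neg A) ∈ q.openAss
  | .negE A _ p q => p.wf ∧ q.wf ∧ p.concl = Formula.neg A ∧ q.concl = A

/-- The set of formulas that occur as undischarged assumptions of a deduction. -/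
def assumptions (d : PT) : Set Formula := {A | ∃ ℓ, (ℓ, A) ∈ d.openAss}

end PT
namespace PT

/-- `openLeafMajor d ℓ G` holds when the deduction `d` contains an application
of an elimination rule whose major premise is an assumption occurrence
`ass ℓ G` that is still open (undischarged) at the root of `d`.  If a rule
below `d` discharges the class `ℓ`, such an occurrence is a formula occurrence
that is both the major premise of an elimination rule and discharged by that
lower rule. -/
def openLeafMajor : PT → ℕ → Formula → Prop
  | .ass _ _, _, _ => False
  | .andI ℓ' _ _ p q r, ℓ, G =>
      p.openLeafMajor ℓ G ∨ q.openLeafMajor ℓ G ∨ (r.openLeafMajor ℓ G ∧ ℓ ≠ ℓ')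
  | .andE ℓA ℓB _ _ p q, ℓ, G =>
      p = .ass ℓ G ∨ p.openLeafMajor ℓ G ∨
        (q.openLeafMajor ℓ G ∧ ℓ ≠ ℓA ∧ ℓ ≠ ℓB)
  | .orI₁ ℓ' _ _ p q, ℓ, G => p.openLeafMajor ℓ G ∨ (q.openLeafMajor ℓ G ∧ ℓ ≠ ℓ')
  | .orI₂ ℓ' _ _ p q, ℓ, G => p.openLeafMajor ℓ G ∨ (q.openLeafMajor ℓ G ∧ ℓ ≠ ℓ')
  | .orE ℓA ℓB _ _ p q r, ℓ, G =>
      p = .ass ℓ G ∨ p.openLeafMajor ℓ G ∨ (q.openLeafMajor ℓ G ∧ ℓ ≠ ℓA) ∨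
        (r.openLeafMajor ℓ G ∧ ℓ ≠ ℓB)
  | .impI ℓ' _ _ p q, ℓ, G => p.openLeafMajor ℓ G ∨ (q.openLeafMajor ℓ G ∧ ℓ ≠ ℓ')
  | .tr ℓA ℓAB _ _ p q, ℓ, G =>
      (p.openLeafMajor ℓ G ∧ ℓ ≠ ℓA) ∨ (q.openLeafMajor ℓ G ∧ ℓ ≠ ℓAB)
  | .impE ℓ' _ _ p q r, ℓ, G =>
      p = .ass ℓ G ∨ p.openLeafMajor ℓ G ∨ q.openLeafMajor ℓ G ∨
        (r.openLeafMajor ℓ G ∧ ℓ ≠ ℓ')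
  | .negI ℓA ℓnA _ p q, ℓ, G =>
      (p.openLeafMajor ℓ G ∧ ℓ ≠ ℓA) ∨ (q.openLeafMajor ℓ G ∧ ℓ ≠ ℓnA)
  | .negE _ _ p q, ℓ, G => p = .ass ℓ G ∨ p.openLeafMajor ℓ G ∨ q.openLeafMajor ℓ G

/-- `d` contains a *maximal formula*: an occurrence of `A∗B` (or `¬A`) that is
the major premise of an application of `∗E` and at the same time the major
assumption discharged by an application of an introduction rule for `∗`
(`⊃I` or `TR` in case `∗` is `⊃`). -/
def hasMaxFormula : PT → Prop
  | .ass _ _ => False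
  | .andI ℓ A B p q r => p.hasMaxFormula ∨ q.hasMaxFormula ∨ r.hasMaxFormula ∨
      r.openLeafMajor ℓ (Formula.conj A B)
  | .andE _ _ _ _ p q => p.hasMaxFormula ∨ q.hasMaxFormula
  | .orI₁ ℓ A B p q => p.hasMaxFormula ∨ q.hasMaxFormula ∨
      q.openLeafMajor ℓ (Formula.disj A B)
  | .orI₂ ℓ A B p q => p.hasMaxFormula ∨ q.hasMaxFormula ∨
      q.openLeafMajor ℓ (Formula.disj A B)
  | .orE _ _ _ _ p q r => p.hasMaxFormula ∨ q.hasMaxFormula ∨ r.hasMaxFormula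
  | .impI ℓ A B p q => p.hasMaxFormula ∨ q.hasMaxFormula ∨
      q.openLeafMajor ℓ (Formula.imp A B)
  | .tr _ ℓAB A B p q => p.hasMaxFormula ∨ q.hasMaxFormula ∨
      q.openLeafMajor ℓAB (Formula.imp A B)
  | .impE _ _ _ p q r => p.hasMaxFormula ∨ q.hasMaxFormula ∨ r.hasMaxFormula
  | .negI _ ℓnA A p q => p.hasMaxFormula ∨ q.hasMaxFormula ∨
      q.openLeafMajor ℓnA (Formula.neg A)
  | .negE _ _ p q => p.hasMaxFormula ∨ q.hasMaxFormula

/-- The deduction is a single assumption occurrence. -/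
def isAss : PT → Prop
  | .ass _ _ => True
  | _ => False

/-- `d` contains a *maximal segment*: a segment — a sequence of occurrences of
one and the same formula, each member being an arbitrary premise of a rule
application whose conclusion is the next member, starting either with an
assumption discharged as an arbitrary premise or with the conclusion of `¬E` —
whose last formula is the major premise of an elimination rule.  Since the
conclusion of every rule application of **C** is either the conclusion of `¬E`
or (an occurrence of the same formula as) one of its arbitrary premises, a
maximal segment occurs exactly when the major premise of some elimination rule
is the conclusion of a rule application, i.e. not an assumption. -/
def hasMaxSegment : PT → Prop
  | .ass _ _ => False
  | .andI _ _ _ p q r => p.hasMaxSegment ∨ q.hasMaxSegment ∨ r.hasMaxSegment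
  | .andE _ _ _ _ p q => ¬ p.isAss ∨ p.hasMaxSegment ∨ q.hasMaxSegment
  | .orI₁ _ _ _ p q => p.hasMaxSegment ∨ q.hasMaxSegment
  | .orI₂ _ _ _ p q => p.hasMaxSegment ∨ q.hasMaxSegment
  | .orE _ _ _ _ p q r =>
      ¬ p.isAss ∨ p.hasMaxSegment ∨ q.hasMaxSegment ∨ r.hasMaxSegment
  | .impI _ _ _ p q => p.hasMaxSegment ∨ q.hasMaxSegment
  | .tr _ _ _ _ p q => p.hasMaxSegment ∨ q.hasMaxSegment
  | .impE _ _ _ p q r =>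
      ¬ p.isAss ∨ p.hasMaxSegment ∨ q.hasMaxSegment ∨ r.hasMaxSegment
  | .negI _ _ _ p q => p.hasMaxSegment ∨ q.hasMaxSegment
  | .negE _ _ p q => ¬ p.isAss ∨ p.hasMaxSegment ∨ q.hasMaxSegment

/-- A deduction is in *normal form* if it contains neither maximal formulas
nor maximal segments. -/
def normal (d : PT) : Prop := ¬ d.hasMaxFormula ∧ ¬ d.hasMaxSegment

end PT

namespace PT

/-- The immediate subdeductions of a deduction, in the order in which the
constructor lists them (major premise first for eliminations). -/
def children : PT → List PT
  | .ass _ _ => []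
  | .andI _ _ _ p q r => [p, q, r]
  | .andE _ _ _ _ p q => [p, q]
  | .orI₁ _ _ _ p q => [p, q]
  | .orI₂ _ _ _ p q => [p, q]
  | .orE _ _ _ _ p q r => [p, q, r]
  | .impI _ _ _ p q => [p, q]
  | .tr _ _ _ _ p q => [p, q]
  | .impE _ _ _ p q r => [p, q, r]
  | .negI _ _ _ p q => [p, q]
  | .negE _ _ p q => [p, q]

/-- The subdeduction at a position (a path of child indices from the root). -/
def subtreeAt : List ℕ → PT → Option PT
  | [], d => some d
  | i :: p, d => (d.children[i]?).bind fun c => subtreeAt p c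

/-- The node of `d` sitting at position `q`. -/
def nodeAt (d : PT) (q : List ℕ) : Option PT := subtreeAt q d

/-- The discharges effected by the last rule application of a deduction, as a
list of triples `(k, ℓ, F)`: assumptions of class `ℓ`, of form `F`, are
discharged above the `k`-th immediate subdeduction. -/
def discharges : PT → List (ℕ × ℕ × Formula)
  | .ass _ _ => []
  | .andI ℓ A B _ _ _ => [(2, ℓ, Formula.conj A B)]
  | .andE ℓA ℓB A B _ _ => [(1, ℓA, A), (1, ℓB, B)]
  | .orI₁ ℓ A B _ _ => [(1, ℓ, Formula.disj A B)]
  | .orI₂ ℓ A B _ _ => [(1, ℓ, Formula.disj A B)]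
  | .orE ℓA ℓB A B _ _ _ => [(1, ℓA, A), (2, ℓB, B)]
  | .impI ℓ A B _ _ => [(1, ℓ, Formula.imp A B)]
  | .tr ℓA ℓAB A B _ _ => [(0, ℓA, A), (1, ℓAB, Formula.imp A B)]
  | .impE ℓ _ B _ _ _ => [(2, ℓ, B)]
  | .negI ℓA ℓnA A _ _ => [(0, ℓA, A), (1, ℓnA, Formula.neg A)]
  | .negE _ _ _ _ => []

/-- The discharge of the *major assumption* of a general introduction rule
(the discharged formula with the governed connective as main operator). -/
def majorDischarges : PT → List (ℕ × ℕ × Formula)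
  | .andI ℓ A B _ _ _ => [(2, ℓ, Formula.conj A B)]
  | .orI₁ ℓ A B _ _ => [(1, ℓ, Formula.disj A B)]
  | .orI₂ ℓ A B _ _ => [(1, ℓ, Formula.disj A B)]
  | .impI ℓ A B _ _ => [(1, ℓ, Formula.imp A B)]
  | .tr _ ℓAB A B _ _ => [(1, ℓAB, Formula.imp A B)]
  | .negI _ ℓnA A _ _ => [(1, ℓnA, Formula.neg A)]
  | _ => []

/-- Indices of the subdeductions concluding the *specific premises* of a rule
(`TR` and `¬I` have none). -/
def specificIdx : PT → List ℕ
  | .andI _ _ _ _ _ _ => [0, 1]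
  | .orI₁ _ _ _ _ _ => [0]
  | .orI₂ _ _ _ _ _ => [0]
  | .impI _ _ _ _ _ => [0]
  | _ => []

/-- Indices of the subdeductions concluding the *arbitrary premises* of a rule. -/
def arbIdx : PT → List ℕ
  | .andI _ _ _ _ _ _ => [2]
  | .andE _ _ _ _ _ _ => [1]
  | .orI₁ _ _ _ _ _ => [1]
  | .orI₂ _ _ _ _ _ => [1]
  | .orE _ _ _ _ _ _ _ => [1, 2]
  | .impI _ _ _ _ _ => [1]
  | .tr _ _ _ _ _ _ => [0, 1]
  | .impE _ _ _ _ _ _ => [2]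
  | .negI _ _ _ _ _ => [0, 1]
  | _ => []

/-- The last rule application is an elimination rule. -/
def isElim : PT → Prop
  | .andE _ _ _ _ _ _ => True
  | .orE _ _ _ _ _ _ _ => True
  | .impE _ _ _ _ _ _ => True
  | .negE _ _ _ _ => True
  | _ => False

/-- The last rule application is an introduction rule. -/
def isIntro : PT → Prop
  | .andI _ _ _ _ _ _ => True
  | .orI₁ _ _ _ _ _ => True
  | .orI₂ _ _ _ _ _ => True
  | .impI _ _ _ _ _ => True
  | .tr _ _ _ _ _ _ => True
  | .negI _ _ _ _ _ => True
  | _ => False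

/-- The last rule application is an introduction rule other than `¬I` or `TR`. -/
def isIntroNotTRNegI : PT → Prop
  | .andI _ _ _ _ _ _ => True
  | .orI₁ _ _ _ _ _ => True
  | .orI₂ _ _ _ _ _ => True
  | .impI _ _ _ _ _ => True
  | _ => False

def isNegE : PT → Prop
  | .negE _ _ _ _ => True
  | _ => False

def isImpE : PT → Prop
  | .impE _ _ _ _ _ _ => True
  | _ => False

/-- `openLeafPath p d ℓ F`: the node of `d` at position `p` is the assumption
occurrence `ass ℓ F`, and this particular occurrence is still open
(undischarged) at the root of `d`. -/
def openLeafPath : List ℕ → PT → ℕ → Formula → Prop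
  | [], d, ℓ, F => d = .ass ℓ F
  | i :: p, d, ℓ, F =>
      (∃ c, d.children[i]? = some c ∧ openLeafPath p c ℓ F) ∧
      ∀ G, (i, ℓ, G) ∉ d.discharges

/-- The assumption occurrence of `d` at position `pos` is discharged by the
rule application at position `q`. -/
def DischargedBy (d : PT) (pos q : List ℕ) : Prop :=
  ∃ e k ℓ F rest c, d.nodeAt q = some e ∧ (k, ℓ, F) ∈ e.discharges ∧
    pos = q ++ k :: rest ∧ e.children[k]? = some c ∧ openLeafPath rest c ℓ F

/-- The assumption occurrence of `d` at position `pos` is the major assumption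
discharged by the (introduction) rule application at position `q`. -/
def MajorDischargedBy (d : PT) (pos q : List ℕ) : Prop :=
  ∃ e k ℓ F rest c, d.nodeAt q = some e ∧ (k, ℓ, F) ∈ e.majorDischarges ∧
    pos = q ++ k :: rest ∧ e.children[k]? = some c ∧ openLeafPath rest c ℓ F

/-- One step of a branch (Definition of branches): from a formula occurrence at
position `p` to the next occurrence at position `p'`.  (The conclusion of the
rule application at position `q` is the occurrence at `q` itself; its premises
are the conclusions of its immediate subdeductions, at positions `q ++ [k]`.)

(i) if `p` is the major premise of an elimination rule other than `¬E`, `p'`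
    is an assumption discharged by it; if `p` is the major premise of `¬E`,
    `p'` is the conclusion of the rule;
(ii) if `p` is a specific premise of an introduction rule, `p'` is a major
    assumption discharged by it;
(iii) if `p` is an arbitrary premise of a rule, `p'` is the conclusion of the
    rule. -/
def BranchStep (d : PT) (p p' : List ℕ) : Prop :=
  (∃ q e, d.nodeAt q = some e ∧ e.isElim ∧ ¬ e.isNegE ∧ p = q ++ [0] ∧
      DischargedBy d p' q) ∨
  (∃ q e, d.nodeAt q = some e ∧ e.isNegE ∧ p = q ++ [0] ∧ p' = q) ∨
  (∃ q e k, d.nodeAt q = some e ∧ k ∈ e.specificIdx ∧ p = q ++ [k] ∧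
      MajorDischargedBy d p' q) ∨
  (∃ q e k, d.nodeAt q = some e ∧ k ∈ e.arbIdx ∧ p = q ++ [k] ∧ p' = q)

/-- A branch starts with an assumption of the deduction that is neither
discharged by an elimination rule nor the major assumption discharged by an
introduction rule other than `¬I` or `TR`. -/
def BranchStart (d : PT) (pos : List ℕ) : Prop :=
  (∃ ℓ F, d.nodeAt pos = some (.ass ℓ F)) ∧
  (¬ ∃ q e, d.nodeAt q = some e ∧ e.isElim ∧ DischargedBy d pos q) ∧
  (¬ ∃ q e, d.nodeAt q = some e ∧ e.isIntroNotTRNegI ∧ MajorDischargedBy d pos q)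

/-- A branch ends with the conclusion of the deduction or with the minor
premise of `⊃E` or of `¬E`. -/
def BranchEnd (d : PT) (pos : List ℕ) : Prop :=
  pos = [] ∨
  ∃ q e, d.nodeAt q = some e ∧ (e.isImpE ∨ e.isNegE) ∧ pos = q ++ [1]

/-- `σ` is a branch in the deduction `d`: a sequence of (positions of) formula
occurrences linked by `BranchStep`, starting and ending as prescribed. -/
def IsBranch (d : PT) (σ : List (List ℕ)) : Prop :=
  ∃ p₀ pn, σ.head? = some p₀ ∧ σ.getLast? = some pn ∧
    BranchStart d p₀ ∧ BranchEnd d pn ∧ List.Chain' (BranchStep d) σ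

/-- The occurrence of `d` at position `pos` is the major premise of an
application of an elimination rule. -/
def IsElimMajorPos (d : PT) (pos : List ℕ) : Prop :=
  ∃ q e, d.nodeAt q = some e ∧ e.isElim ∧ pos = q ++ [0]

/-- The occurrence of `d` at position `pos` is a major assumption discharged by
an application of an introduction rule. -/
def IsIntroMajorDischargedPos (d : PT) (pos : List ℕ) : Prop :=
  ∃ q e, d.nodeAt q = some e ∧ e.isIntro ∧ MajorDischargedBy d pos q

end PT

namespace PT

lemma subtreeAt_append (a b : List ℕ) : ∀ d : PT,
    subtreeAt (a ++ b) d = (subtreeAt a d).bind (subtreeAt b) := by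
  induction a with
  | nil => intro d; simp [subtreeAt]
  | cons i a ih =>
    intro d
    simp only [List.cons_append, subtreeAt, Option.bind_assoc]
    cases d.children[i]? <;> simp [ih]

lemma hasMaxFormula_child {d c : PT} (h : c ∈ d.children)
    (hc : c.hasMaxFormula) : d.hasMaxFormula := by
  cases d <;> simp [children] at h <;>
    first
    | (rcases h with rfl | rfl | rfl <;> simp [hasMaxFormula] <;> tauto)
    | (rcases h with rfl | rfl <;> simp [hasMaxFormula] <;> tauto)

lemma hasMaxSegment_child {d c : PT} (h : c ∈ d.children)
    (hc : c.hasMaxSegment) : d.hasMaxSegment := by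
  cases d <;> simp [children] at h <;>
    first
    | (rcases h with rfl | rfl | rfl <;> simp [hasMaxSegment] <;> tauto)
    | (rcases h with rfl | rfl <;> simp [hasMaxSegment] <;> tauto)

lemma hasMaxFormula_of_nodeAt : ∀ (q : List ℕ) (d e : PT),
    d.nodeAt q = some e → e.hasMaxFormula → d.hasMaxFormula := by
  intro q
  induction q with
  | nil => intro d e h hm; simp [nodeAt, subtreeAt] at h; subst h; exact hm
  | cons i q ih =>
    intro d e h hm
    simp only [nodeAt, subtreeAt, Option.bind_eq_some_iff] at h
    obtain ⟨c, hc, hsub⟩ := h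
    exact hasMaxFormula_child (List.mem_of_getElem? hc) (ih c e hsub hm)

lemma hasMaxSegment_of_nodeAt : ∀ (q : List ℕ) (d e : PT),
    d.nodeAt q = some e → e.hasMaxSegment → d.hasMaxSegment := by
  intro q
  induction q with
  | nil => intro d e h hm; simp [nodeAt, subtreeAt] at h; subst h; exact hm
  | cons i q ih =>
    intro d e h hm
    simp only [nodeAt, subtreeAt, Option.bind_eq_some_iff] at h
    obtain ⟨c, hc, hsub⟩ := h
    exact hasMaxSegment_child (List.mem_of_getElem? hc) (ih c e hsub hm)

end PT
namespace PT

lemma openLeafMajor_of_path (ℓ : ℕ) (F : Formula) :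
    ∀ (rest : List ℕ) (c t : PT), openLeafPath (rest ++ [0]) c ℓ F →
      subtreeAt rest c = some t → t.isElim → openLeafMajor c ℓ F := by
  intro rest
  induction rest with
  | nil =>
    intro c t h hsub he
    simp [subtreeAt] at hsub; subst hsub
    obtain ⟨⟨c0, hc0, hass⟩, hnd⟩ := h
    simp [openLeafPath] at hass
    cases c <;> simp [isElim] at he <;> simp [children] at hc0 <;>
      exact Or.inl (hc0.trans hass)
  | cons i rest ih =>
    intro c t h hsub he
    obtain ⟨⟨c', hc', hpath⟩, hnd⟩ := h
    simp only [subtreeAt, Option.bind_eq_some_iff] at hsub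
    obtain ⟨c'', hc'', hsub'⟩ := hsub
    rw [hc'] at hc''; injection hc''; subst c''
    have holm := ih c' t hpath hsub' he
    cases c <;> rcases i with _ | _ | _ | i <;> simp [children] at hc' <;>
        subst hc' <;> simp only [openLeafMajor] <;>
      first
      | exact Or.inl holm
      | exact Or.inr (Or.inl holm)
      | exact Or.inr (Or.inr (Or.inl holm))
      | exact Or.inr (Or.inr holm)
      | exact Or.inl ⟨holm, fun hl => hnd _ (by simp [discharges, hl] <;> first | rfl | exact Or.inl rfl | exact Or.inr rfl)⟩
      | exact Or.inr ⟨holm, fun hl => hnd _ (by simp [discharges, hl] <;> first | rfl | exact Or.inl rfl | exact Or.inr rfl)⟩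
      | exact Or.inr (Or.inr ⟨holm, fun hl => hnd _ (by simp [discharges, hl] <;> first | rfl | exact Or.inl rfl | exact Or.inr rfl)⟩)
      | exact Or.inr (Or.inr (Or.inl ⟨holm, fun hl => hnd _ (by simp [discharges, hl] <;> first | rfl | exact Or.inl rfl | exact Or.inr rfl)⟩))
      | exact Or.inr (Or.inr (Or.inr ⟨holm, fun hl => hnd _ (by simp [discharges, hl] <;> first | rfl | exact Or.inl rfl | exact Or.inr rfl)⟩))
      | exact Or.inr (Or.inr ⟨holm, fun hl => hnd _ (by simp [discharges, hl] <;> first | rfl | exact Or.inl rfl | exact Or.inr rfl),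
          fun hl => hnd _ (by simp [discharges, hl] <;> first | rfl | exact Or.inl rfl | exact Or.inr rfl)⟩)

end PT
namespace PT

lemma hasMaxFormula_of_majorDischarge {e c : PT} {k ℓ : ℕ} {F : Formula}
    (hk : (k, ℓ, F) ∈ e.majorDischarges) (hc : e.children[k]? = some c)
    (holm : c.openLeafMajor ℓ F) : e.hasMaxFormula := by
  cases e <;> simp [majorDischarges, Prod.mk.injEq] at hk <;>
    obtain ⟨rfl, rfl, rfl⟩ := hk <;> simp [children] at hc <;>
    subst hc <;> simp [hasMaxFormula] <;> tauto

lemma majorDischarges_ne_zero {e : PT} {k ℓ : ℕ} {F : Formula}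
    (hk : (k, ℓ, F) ∈ e.majorDischarges) : k ≠ 0 := by
  cases e <;> simp [majorDischarges, Prod.mk.injEq] at hk <;>
    obtain ⟨rfl, -, -⟩ := hk <;> simp

lemma not_elim_and_introMajor {d : PT} (hn : d.normal) {pos q : List ℕ}
    (hmd : MajorDischargedBy d pos q) (hel : IsElimMajorPos d pos) : False := by
  obtain ⟨e, k, ℓ, F, rest, c, hq, hk, hpos, hc, hpath⟩ := hmd
  obtain ⟨q2, e2, hq2, he2, hpos2⟩ := hel
  have hpe : q ++ k :: rest = q2 ++ [0] := hpos.symm.trans hpos2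
  rcases eq_or_ne rest [] with rfl | hne
  · have hlen : q.length = q2.length := by
      have := congrArg List.length hpe; simp at this; omega
    obtain ⟨hq12, hk0⟩ := List.append_inj hpe hlen
    simp at hk0
    exact majorDischarges_ne_zero hk hk0
  · have hrest : rest = rest.dropLast ++ [rest.getLast hne] :=
      (List.dropLast_append_getLast hne).symm
    rw [hrest] at hpe
    have hpos' : (q ++ k :: rest.dropLast) ++ [rest.getLast hne] = q2 ++ [0] := by
      simpa using hpe
    have hlen : (q ++ k :: rest.dropLast).length = q2.length := by
      have h1 := congrArg List.length hpos'
      simp at h1 ⊢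
      omega
    obtain ⟨hq12, hlast⟩ := List.append_inj hpos' hlen
    simp at hlast
    -- node at q2 is e2, reachable from c via rest.dropLast
    have hnode : subtreeAt rest.dropLast c = some e2 := by
      have h1 : d.nodeAt (q ++ k :: rest.dropLast) = some e2 := by rw [hq12]; exact hq2
      rw [nodeAt, subtreeAt_append] at h1
      rw [nodeAt] at hq
      rw [hq] at h1
      simpa [subtreeAt, hc] using h1
    have hpath' : openLeafPath (rest.dropLast ++ [0]) c ℓ F := by
      rw [hrest, hlast] at hpath; exact hpath
    have holm := openLeafMajor_of_path ℓ F rest.dropLast c e2 hpath' hnode he2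
    exact hn.1 (hasMaxFormula_of_nodeAt q d e hq
      (hasMaxFormula_of_majorDischarge hk hc holm))

lemma hasMaxSegment_of_elim_nonass {d e t : PT} {q : List ℕ}
    (hq : d.nodeAt q = some e) (he : e.isElim) (ht : e.children[0]? = some t)
    (hta : ¬ t.isAss) : d.hasMaxSegment := by
  refine hasMaxSegment_of_nodeAt q d e hq ?_
  cases e <;> simp [isElim] at he <;> simp [children] at ht <;>
    subst ht <;> simp [hasMaxSegment] <;> tauto

/-- The "I-part" invariant. -/
def Bad (d : PT) (p : List ℕ) : Prop :=
  IsIntroMajorDischargedPos d p ∨ ∃ t, d.nodeAt p = some t ∧ ¬ t.isAss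

lemma Bad.not_elimMajor {d : PT} (hn : d.normal) {p : List ℕ}
    (hb : Bad d p) (hel : IsElimMajorPos d p) : False := by
  obtain ⟨q2, e2, hq2, he2, hpos2⟩ := hel
  rcases hb with ⟨q, e, hq, hi, hmd⟩ | ⟨t, ht, hta⟩
  · exact not_elim_and_introMajor hn hmd ⟨q2, e2, hq2, he2, hpos2⟩
  · have : e2.children[0]? = some t := by
      rw [hpos2, nodeAt, subtreeAt_append, ← nodeAt, hq2] at ht
      simpa [subtreeAt, Option.bind_eq_some_iff] using ht
    exact hn.2 (hasMaxSegment_of_elim_nonass hq2 he2 this hta)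

lemma isIntro_of_specific {e : PT} {k : ℕ} (h : k ∈ e.specificIdx) : e.isIntro := by
  cases e <;> simp [specificIdx, isIntro] at h ⊢

lemma not_isAss_of_arb {e : PT} {k : ℕ} (h : k ∈ e.arbIdx) : ¬ e.isAss := by
  cases e <;> simp [arbIdx, isAss] at h ⊢

lemma isElim_of_isNegE {e : PT} (h : e.isNegE) : e.isElim := by
  cases e <;> simp [isNegE, isElim] at h ⊢

lemma Bad.step {d : PT} (hn : d.normal) {p p' : List ℕ}
    (hb : Bad d p) (hs : BranchStep d p p') : Bad d p' := by
  rcases hs with ⟨q, e, hq, he, -, hp, hd⟩ | ⟨q, e, hq, he, hp, hd⟩ |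
    ⟨q, e, k, hq, hk, hp, hd⟩ | ⟨q, e, k, hq, hk, hp, hd⟩
  · exact absurd ⟨q, e, hq, he, hp⟩ (fun h => hb.not_elimMajor hn h)
  · exact absurd ⟨q, e, hq, isElim_of_isNegE he, hp⟩ (fun h => hb.not_elimMajor hn h)
  · exact Or.inl ⟨q, e, hq, isIntro_of_specific hk, hd⟩
  · exact Or.inr ⟨e, hd ▸ hq, not_isAss_of_arb hk⟩

end PT
/-- In a deduction in normal form in the system C, on any
branch, every formula occurrence that is the major premise of an elimination
rule precedes every formula occurrence that is a major assumption discharged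
by an introduction rule. -/
theorem elim_major_precedes_intro_major_on_branch
    (d : PT) (hd : d.wf) (hn : d.normal) (σ : List (List ℕ))
    (hσ : d.IsBranch σ) :
    ∀ (i j : ℕ) (pi pj : List ℕ), σ[i]? = some pi → σ[j]? = some pj →
      d.IsElimMajorPos pi → d.IsIntroMajorDischargedPos pj → i < j := by
  intro i j pi pj hi hj helim hintro
  by_contra hlt
  push_neg at hlt
  obtain ⟨p₀, pn, h₀, hlast, hstart, hend, hchain⟩ := hσ
  obtain ⟨hilen, hival⟩ := List.getElem?_eq_some_iff.mp hi
  have key : ∀ t, j + t ≤ i → ∀ p, σ[j + t]? = some p → PT.Bad d p := by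
    intro t
    induction t with
    | zero =>
      intro _ p hp
      rw [Nat.add_zero, hj] at hp
      exact Or.inl ((Option.some_inj.mp hp) ▸ hintro)
    | succ t ih =>
      intro hle p hp
      have hlt1 : j + t < σ.length := by omega
      have hbad := ih (by omega) σ[j+t] (List.getElem?_eq_getElem hlt1)
      have hstep : PT.BranchStep d σ[j+t] p := by
        have h2 : j + t < σ.length - 1 := by omega
        have hc := List.isChain_iff_getElem.mp hchain (j + t) (by omega)
        have hlt2 : j + t + 1 < σ.length := by omega
        rw [show j + (t + 1) = j + t + 1 by omega] at hp
        have hpe : σ[j+t+1] = p :=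
          Option.some_inj.mp ((List.getElem?_eq_getElem hlt2).symm.trans hp)
        simpa [List.get_eq_getElem, hpe] using hc
      exact hbad.step hn hstep
  have hb := key (i - j) (by omega) pi (by rwa [Nat.add_sub_cancel' hlt])
  exact hb.not_elimMajor hn helim
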